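/- Pattern D (three-term contiguous relation of ₃φ₂-series): Let a,b,c,d,e ∈ ℂ with a,c,e ≠ 0, |bd/(qace)| < 1, and all denominators appearing below nonzero. Set 𝒟_q = (1−q/b)(1−q/d)·a / ((1−qa/b)(1−qa/d)), 𝔻_q = (1−a)(1−qace/(bd))·q / ((1−qa/b)(1−qa/d)·ce), and 𝔇_q = (1−qace/(bd))(1−q/b)(1−q/d)·a / ((1−qa/b)(1−qa/d)(1−c/q)(1−e/q)). Then ₃φ₂(a,c,e; b,d; q, bd/(ace)) = 𝒟_q·₃φ₂(a,c/q,e/q; b/q,d/q; q, bd/(ace)) + 𝔻_q·₃φ₂(qa,c,e; b,d; q, bd/(qace)), and also ₃φ₂(a,c,e; b,d; q, bd/(ace)) = 𝒟_q·₃φ₂(a,c/q,e/q; b/q,d/q; q, bd/(ace)) + 𝔇_q·₃φ₂*(a,c/q,e/q; b/q,d/q; q, bd/(qace)). -/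

import Mathlib

noncomputable def qPoch (q x : ℂ) (k : ℕ) : ℂ :=
  ∏ i ∈ Finset.range k, (1 - x * q ^ i)

/-- The basic hypergeometric series ₃φ₂(a,c,e; b,d; q, z). -/
noncomputable def phi32 (q z a c e b d : ℂ) : ℂ :=
  ∑' k : ℕ, (qPoch q a k * qPoch q c k * qPoch q e k) /
      (qPoch q b k * qPoch q d k * qPoch q q k) * z ^ k

/-- The shifted basic hypergeometric series ₃φ₂*(a,c,e; b,d; q, z). -/
noncomputable def phi32s (q z a c e b d : ℂ) : ℂ :=
  ∑' k : ℕ, (qPoch q a k * qPoch q c k * qPoch q e k) /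
      (qPoch q b k * qPoch q d k * qPoch q q k) * ((1 - q ^ k) * z ^ k)


open Filter Topology

lemma qPoch_succ (q x : ℂ) (k : ℕ) :
    qPoch q x (k + 1) = qPoch q x k * (1 - x * q ^ k) := Finset.prod_range_succ _ _

lemma qPoch_succ' (q x : ℂ) (k : ℕ) :
    qPoch q x (k + 1) = (1 - x) * qPoch q (q * x) k := by
  rw [qPoch, Finset.prod_range_succ']
  simp only [pow_zero, mul_one, qPoch]
  rw [mul_comm]
  congr 1
  refine Finset.prod_congr rfl fun i _ => ?_
  ring

lemma qPoch_shift (q x : ℂ) (hq : q ≠ 0) (k : ℕ) :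
    qPoch q (x / q) k * (1 - x / q * q ^ k) = (1 - x / q) * qPoch q x k := by
  have h1 := qPoch_succ q (x / q) k
  have h2 := qPoch_succ' q (x / q) k
  rw [mul_div_cancel₀ x hq] at h2
  rw [← h1, h2]

lemma qPoch_rel_a (q x : ℂ) (k : ℕ) :
    (1 - x) * qPoch q (q * x) k = qPoch q x k * (1 - x * q ^ k) := by
  rw [← qPoch_succ', qPoch_succ]

lemma one_sub_pow_ne (q : ℂ) (hq1 : ‖q‖ < 1) (n : ℕ) (hn : n ≠ 0) :
    (1 : ℂ) - q ^ n ≠ 0 := by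
  intro h
  have h1 : q ^ n = 1 := by linear_combination -h
  have h2 : ‖q‖ ^ n < 1 :=
    pow_lt_one₀ (norm_nonneg q) hq1 hn
  rw [← norm_pow, h1] at h2
  simp at h2

lemma qPoch_q_ne (q : ℂ) (hq1 : ‖q‖ < 1) (k : ℕ) : qPoch q q k ≠ 0 := by
  rw [qPoch]
  apply Finset.prod_ne_zero_iff.2
  intro i _
  have h := one_sub_pow_ne q hq1 (i + 1) (by omega)
  rw [pow_succ'] at h
  exact h

lemma qPoch_factor_ne {q x : ℂ} (h : ∀ k, qPoch q x k ≠ 0) (k : ℕ) : 1 - x * q ^ k ≠ 0 := by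
  have h2 := h (k + 1)
  rw [qPoch_succ] at h2
  exact fun hh => h2 (by rw [hh, mul_zero])

noncomputable def trm (q z a c e b d : ℂ) (k : ℕ) : ℂ :=
  qPoch q a k * qPoch q c k * qPoch q e k /
      (qPoch q b k * qPoch q d k * qPoch q q k) * z ^ k

noncomputable def trms (q z a c e b d : ℂ) (k : ℕ) : ℂ :=
  qPoch q a k * qPoch q c k * qPoch q e k /
      (qPoch q b k * qPoch q d k * qPoch q q k) * ((1 - q ^ k) * z ^ k)

lemma summable_of_ratio_tendsto' {f : ℕ → ℂ} {ρ : ℕ → ℂ} {l : ℝ} (hl : l < 1)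
    (hrat : ∀ k, f (k + 1) = ρ k * f k)
    (hρ : Tendsto (fun k => ‖ρ k‖) atTop (𝓝 l)) : Summable f := by
  set r : ℝ := (l + 1) / 2 with hr
  have hr1 : r < 1 := by rw [hr]; linarith
  have hlr : l < r := by rw [hr]; linarith
  have hev : ∀ᶠ k in atTop, ‖ρ k‖ < r := hρ.eventually_lt_const hlr
  apply summable_of_ratio_norm_eventually_le hr1
  filter_upwards [hev] with k hk
  rw [hrat k, norm_mul]
  exact mul_le_mul_of_nonneg_right hk.le (norm_nonneg _)

lemma ratio_tendsto (q a c e b d z : ℂ) (hq : ‖q‖ < 1) :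
    Tendsto (fun k : ℕ => ‖(1 - a * q ^ k) * (1 - c * q ^ k) * (1 - e * q ^ k) * z /
      ((1 - b * q ^ k) * (1 - d * q ^ k) * (1 - q * q ^ k))‖) atTop (𝓝 ‖z‖) := by
  have h0 : Tendsto (fun k : ℕ => (q : ℂ) ^ k) atTop (𝓝 0) := by
    apply tendsto_pow_atTop_nhds_zero_of_norm_lt_one
    simpa using hq
  have hstep : Tendsto (fun k : ℕ => (1 - a * q ^ k) * (1 - c * q ^ k) * (1 - e * q ^ k) * z /
      ((1 - b * q ^ k) * (1 - d * q ^ k) * (1 - q * q ^ k))) atTop (𝓝 z) := by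
    have hterm : ∀ y : ℂ, Tendsto (fun k : ℕ => 1 - y * q ^ k) atTop (𝓝 1) := by
      intro y
      have := (tendsto_const_nhds (x := (1:ℂ)) (f := (atTop : Filter ℕ))).sub (h0.const_mul y)
      simpa using this
    have hnum : Tendsto (fun k : ℕ => (1 - a * q ^ k) * (1 - c * q ^ k) * (1 - e * q ^ k) * z)
        atTop (𝓝 z) := by
      have := (((hterm a).mul (hterm c)).mul (hterm e)).mul
        (tendsto_const_nhds (x := z) (f := (atTop : Filter ℕ)))
      simpa using this
    have hden : Tendsto (fun k : ℕ => (1 - b * q ^ k) * (1 - d * q ^ k) * (1 - q * q ^ k))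
        atTop (𝓝 1) := by
      have := ((hterm b).mul (hterm d)).mul (hterm q)
      simpa using this
    simpa [Pi.div_def] using hnum.div hden one_ne_zero
  exact (continuous_norm.tendsto z).comp hstep |>.congr fun k => rfl

lemma ratio_aux (Pa Pc Pe Pb Pd Pq A C E B D Q z zk : ℂ)
    (hPb : Pb ≠ 0) (hPd : Pd ≠ 0) (hPq : Pq ≠ 0) (hB : B ≠ 0) (hD : D ≠ 0) (hQ : Q ≠ 0) :
    Pa * A * (Pc * C) * (Pe * E) / (Pb * B * (Pd * D) * (Pq * Q)) * (zk * z)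
      = A * C * E * z / (B * D * Q) * (Pa * Pc * Pe / (Pb * Pd * Pq) * zk) := by
  simp only [div_mul_eq_mul_div, mul_div_assoc', div_div, div_div_eq_mul_div]
  rw [div_eq_div_iff (by simp [hPb, hPd, hPq, hB, hD, hQ]) (by simp [hPb, hPd, hPq, hB, hD, hQ])]
  ring

lemma trm_summable (q z a c e b d : ℂ) (hq1 : ‖q‖ < 1) (hz : ‖z‖ < 1)
    (hpb : ∀ k, qPoch q b k ≠ 0) (hpd : ∀ k, qPoch q d k ≠ 0) :
    Summable (fun k => trm q z a c e b d k) := by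
  apply summable_of_ratio_tendsto' (ρ := fun k => (1 - a * q ^ k) * (1 - c * q ^ k) *
    (1 - e * q ^ k) * z / ((1 - b * q ^ k) * (1 - d * q ^ k) * (1 - q * q ^ k))) hz _
    (ratio_tendsto q a c e b d z hq1)
  intro k
  have hQ : (1:ℂ) - q * q ^ k ≠ 0 := by
    have h := one_sub_pow_ne q hq1 (k + 1) (Nat.succ_ne_zero k)
    rwa [pow_succ'] at h
  have h := ratio_aux (qPoch q a k) (qPoch q c k) (qPoch q e k) (qPoch q b k) (qPoch q d k)
      (qPoch q q k) (1 - a * q ^ k) (1 - c * q ^ k) (1 - e * q ^ k) (1 - b * q ^ k)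
      (1 - d * q ^ k) (1 - q * q ^ k) z (z ^ k)
      (hpb k) (hpd k) (qPoch_q_ne q hq1 k) (qPoch_factor_ne hpb k) (qPoch_factor_ne hpd k) hQ
  show trm q z a c e b d (k + 1) = _
  rw [trm, trm, qPoch_succ, qPoch_succ, qPoch_succ, qPoch_succ, qPoch_succ, qPoch_succ, pow_succ]
  exact h

lemma cancel1 (Pa PC PE PB PD PQ zk x q a b c d e u1 u2 u3 u4 u5 v1 v2 v3 v4 w1 w2 s : ℂ)
    (hx : x ≠ 0) (hq : q ≠ 0) (ha : a ≠ 0) (hb : b ≠ 0) (hc : c ≠ 0) (hd : d ≠ 0) (he : e ≠ 0)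
    (hPB : PB ≠ 0) (hPD : PD ≠ 0) (hPQ : PQ ≠ 0)
    (h1 : u3 ≠ 0) (h2 : u4 ≠ 0) (h3 : u5 ≠ 0)
    (h4 : v1 ≠ 0) (h5 : v2 ≠ 0) (h6 : v3 ≠ 0) (h7 : v4 ≠ 0)
    (h8 : w1 ≠ 0) (h9 : w2 ≠ 0) (h10 : s ≠ 0) :
    Pa * (PC * u1 / v3) * (PE * u2 / v4) / (PB * u3 / v1 * (PD * u4 / v2) * PQ) * zk
      = b * c * d * e * u1 * u2 * v1 * v2 * w1 * w2 * u5 * s * x * (Pa * PC * PE * zk) / (PB * PD * PQ * (x * b * c * d * e * w1 * w2 * v3 * v4 * u3 * u4 * u5 * s)) := by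
  simp only [div_mul_eq_mul_div, mul_div_assoc', div_div, div_div_eq_mul_div]
  rw [div_eq_div_iff (by simp [hx, hq, ha, hb, hc, hd, he, hPB, hPD, hPQ, h1, h2, h3, h4, h5, h6, h7, h8, h9, h10]) (by simp [hx, hq, ha, hb, hc, hd, he, hPB, hPD, hPQ, h1, h2, h3, h4, h5, h6, h7, h8, h9, h10])]
  ring

lemma cancel2 (Pa PC PE PB PD PQ zk x q a b c d e u1 u2 u3 u4 u5 v1 v2 v3 v4 w1 w2 s : ℂ)
    (hx : x ≠ 0) (hq : q ≠ 0) (ha : a ≠ 0) (hb : b ≠ 0) (hc : c ≠ 0) (hd : d ≠ 0) (he : e ≠ 0)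
    (hPB : PB ≠ 0) (hPD : PD ≠ 0) (hPQ : PQ ≠ 0)
    (h1 : u3 ≠ 0) (h2 : u4 ≠ 0) (h3 : u5 ≠ 0)
    (h4 : v1 ≠ 0) (h5 : v2 ≠ 0) (h6 : v3 ≠ 0) (h7 : v4 ≠ 0)
    (h8 : w1 ≠ 0) (h9 : w2 ≠ 0) (h10 : s ≠ 0) :
    (q - b) * (q - d) * a / (w1 * w2) * (Pa * PC * PE / (PB * PD * PQ) * zk)
      = a * b * c * d * e * (q - b) * (q - d) * v3 * v4 * u3 * u4 * u5 * s * x * (Pa * PC * PE * zk) / (PB * PD * PQ * (x * b * c * d * e * w1 * w2 * v3 * v4 * u3 * u4 * u5 * s)) := by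
  simp only [div_mul_eq_mul_div, mul_div_assoc', div_div, div_div_eq_mul_div]
  rw [div_eq_div_iff (by simp [hx, hq, ha, hb, hc, hd, he, hPB, hPD, hPQ, h1, h2, h3, h4, h5, h6, h7, h8, h9, h10]) (by simp [hx, hq, ha, hb, hc, hd, he, hPB, hPD, hPQ, h1, h2, h3, h4, h5, h6, h7, h8, h9, h10])]
  ring

lemma cancel3 (Pa PC PE PB PD PQ zk x q a b c d e u1 u2 u3 u4 u5 v1 v2 v3 v4 w1 w2 s A1 Pqa : ℂ)
    (hx : x ≠ 0) (hq : q ≠ 0) (ha : a ≠ 0) (hb : b ≠ 0) (hc : c ≠ 0) (hd : d ≠ 0) (he : e ≠ 0)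
    (hPB : PB ≠ 0) (hPD : PD ≠ 0) (hPQ : PQ ≠ 0)
    (h1 : u3 ≠ 0) (h2 : u4 ≠ 0) (h3 : u5 ≠ 0)
    (h4 : v1 ≠ 0) (h5 : v2 ≠ 0) (h6 : v3 ≠ 0) (h7 : v4 ≠ 0)
    (h8 : w1 ≠ 0) (h9 : w2 ≠ 0) (h10 : s ≠ 0)
    (hrel : A1 * Pqa = Pa * (1 - a * x)) :
    A1 * -(s) * q / (w1 * w2 * (c * e)) *
        (Pqa * (PC * u1 / v3) * (PE * u2 / v4) / (PB * u3 / v1 * (PD * u4 / v2) * PQ) * (zk / x))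
      = -(q * b * d * (1 - a * x) * u1 * u2 * v1 * v2 * u5 * s * s) * (Pa * PC * PE * zk) / (PB * PD * PQ * (x * b * c * d * e * w1 * w2 * v3 * v4 * u3 * u4 * u5 * s)) := by
  have hstep : A1 * -(s) * q / (w1 * w2 * (c * e)) *
        (Pqa * (PC * u1 / v3) * (PE * u2 / v4) / (PB * u3 / v1 * (PD * u4 / v2) * PQ) * (zk / x))
      = -(s) * q / (w1 * w2 * (c * e)) *
        (A1 * Pqa * (PC * u1 / v3) * (PE * u2 / v4) / (PB * u3 / v1 * (PD * u4 / v2) * PQ) * (zk / x)) := by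
    ring
  rw [hstep, hrel]
  simp only [div_mul_eq_mul_div, mul_div_assoc', div_div, div_div_eq_mul_div]
  rw [div_eq_div_iff (by simp [hx, hq, ha, hb, hc, hd, he, hPB, hPD, hPQ, h1, h2, h3, h4, h5, h6, h7, h8, h9, h10]) (by simp [hx, hq, ha, hb, hc, hd, he, hPB, hPD, hPQ, h1, h2, h3, h4, h5, h6, h7, h8, h9, h10])]
  ring

lemma cancel4 (Pa PC PE PB PD PQ zk x q a b c d e u1 u2 u3 u4 u5 v1 v2 v3 v4 w1 w2 s : ℂ)
    (hx : x ≠ 0) (hq : q ≠ 0) (ha : a ≠ 0) (hb : b ≠ 0) (hc : c ≠ 0) (hd : d ≠ 0) (he : e ≠ 0)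
    (hPB : PB ≠ 0) (hPD : PD ≠ 0) (hPQ : PQ ≠ 0)
    (h1 : u3 ≠ 0) (h2 : u4 ≠ 0) (h3 : u5 ≠ 0)
    (h4 : v1 ≠ 0) (h5 : v2 ≠ 0) (h6 : v3 ≠ 0) (h7 : v4 ≠ 0)
    (h8 : w1 ≠ 0) (h9 : w2 ≠ 0) (h10 : s ≠ 0) :
    a * (q - b) * (q - d) / (w1 * w2 * v3 * v4) * (q * q - c * e * x) *
        (Pa * PC * PE / (PB * PD * PQ) * ((1 - x) * (zk / x)))
      = a * b * c * d * e * (q - b) * (q - d) * (q * q - c * e * x) * (1 - x) * u3 * u4 * u5 * s * (Pa * PC * PE * zk) / (PB * PD * PQ * (x * b * c * d * e * w1 * w2 * v3 * v4 * u3 * u4 * u5 * s)) := by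
  simp only [div_mul_eq_mul_div, mul_div_assoc', div_div, div_div_eq_mul_div]
  rw [div_eq_div_iff (by simp [hx, hq, ha, hb, hc, hd, he, hPB, hPD, hPQ, h1, h2, h3, h4, h5, h6, h7, h8, h9, h10]) (by simp [hx, hq, ha, hb, hc, hd, he, hPB, hPD, hPQ, h1, h2, h3, h4, h5, h6, h7, h8, h9, h10])]
  ring

lemma cancel5 (Pa PC PE PB PD PQ zk x q a b c d e u1 u2 u3 u4 u5 v1 v2 v3 v4 w1 w2 s : ℂ)
    (hx : x ≠ 0) (hq : q ≠ 0) (ha : a ≠ 0) (hb : b ≠ 0) (hc : c ≠ 0) (hd : d ≠ 0) (he : e ≠ 0)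
    (hPB : PB ≠ 0) (hPD : PD ≠ 0) (hPQ : PQ ≠ 0)
    (h1 : u3 ≠ 0) (h2 : u4 ≠ 0) (h3 : u5 ≠ 0)
    (h4 : v1 ≠ 0) (h5 : v2 ≠ 0) (h6 : v3 ≠ 0) (h7 : v4 ≠ 0)
    (h8 : w1 ≠ 0) (h9 : w2 ≠ 0) (h10 : s ≠ 0) :
    a * (q - b) * (q - d) / (w1 * w2 * v3 * v4) * (q * q - c * e * (x * q)) *
        (Pa * (1 - a * x) * (PC * (u1 / q)) * (PE * (u2 / q)) /
          (PB * (u3 / q) * (PD * (u4 / q)) * (PQ * u5)) * (u5 * (zk * (b * d / (a * c * e)) / (x * q))))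
      = b * b * d * d * (q - b) * (q - d) * (q - c * e * x) * (1 - a * x) * u1 * u2 * u5 * s * (Pa * PC * PE * zk) / (PB * PD * PQ * (x * b * c * d * e * w1 * w2 * v3 * v4 * u3 * u4 * u5 * s)) := by
  simp only [div_mul_eq_mul_div, mul_div_assoc', div_div, div_div_eq_mul_div]
  rw [div_eq_div_iff (by simp [hx, hq, ha, hb, hc, hd, he, hPB, hPD, hPQ, h1, h2, h3, h4, h5, h6, h7, h8, h9, h10]) (by simp [hx, hq, ha, hb, hc, hd, he, hPB, hPD, hPQ, h1, h2, h3, h4, h5, h6, h7, h8, h9, h10])]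
  ring

lemma cancel6 (Pa PC PE PB PD PQ zk x q a b c d e u1 u2 u3 u4 u5 v1 v2 v3 v4 w1 w2 s : ℂ)
    (hx : x ≠ 0) (hq : q ≠ 0) (ha : a ≠ 0) (hb : b ≠ 0) (hc : c ≠ 0) (hd : d ≠ 0) (he : e ≠ 0)
    (hPB : PB ≠ 0) (hPD : PD ≠ 0) (hPQ : PQ ≠ 0)
    (h1 : u3 ≠ 0) (h2 : u4 ≠ 0) (h3 : u5 ≠ 0)
    (h4 : v1 ≠ 0) (h5 : v2 ≠ 0) (h6 : v3 ≠ 0) (h7 : v4 ≠ 0)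
    (h8 : w1 ≠ 0) (h9 : w2 ≠ 0) (h10 : s ≠ 0) :
    -(s) * (q - b) * (q - d) * a * q * q / (b * d * (w1 * w2 * v3 * v4)) *
        (Pa * PC * PE / (PB * PD * PQ) * ((1 - x) * (zk / x)))
      = -(q * q * a * c * e * s * s * (q - b) * (q - d) * (1 - x) * u3 * u4 * u5) * (Pa * PC * PE * zk) / (PB * PD * PQ * (x * b * c * d * e * w1 * w2 * v3 * v4 * u3 * u4 * u5 * s)) := by
  simp only [div_mul_eq_mul_div, mul_div_assoc', div_div, div_div_eq_mul_div]
  rw [div_eq_div_iff (by simp [hx, hq, ha, hb, hc, hd, he, hPB, hPD, hPQ, h1, h2, h3, h4, h5, h6, h7, h8, h9, h10]) (by simp [hx, hq, ha, hb, hc, hd, he, hPB, hPD, hPQ, h1, h2, h3, h4, h5, h6, h7, h8, h9, h10])]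
  ring

lemma cancel7 (Pa PC PE PB PD PQ zk x q a b c d e u1 u2 u3 u4 u5 v1 v2 v3 v4 w1 w2 s g : ℂ)
    (hx : x ≠ 0) (hq : q ≠ 0) (ha : a ≠ 0) (hb : b ≠ 0) (hc : c ≠ 0) (hd : d ≠ 0) (he : e ≠ 0)
    (hPB : PB ≠ 0) (hPD : PD ≠ 0) (hPQ : PQ ≠ 0)
    (h1 : u3 ≠ 0) (h2 : u4 ≠ 0) (h3 : u5 ≠ 0)
    (h4 : v1 ≠ 0) (h5 : v2 ≠ 0) (h6 : v3 ≠ 0) (h7 : v4 ≠ 0)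
    (h8 : w1 ≠ 0) (h9 : w2 ≠ 0) (h10 : s ≠ 0) :
    -(q * q * a * g) / (b * d * (w1 * w2) * (v3 * v4)) *
        (Pa * PC * PE / (PB * PD * PQ) * ((1 - x) * (zk / x)))
      = -(q * q * a * c * e * s * g * (1 - x) * u3 * u4 * u5) * (Pa * PC * PE * zk) / (PB * PD * PQ * (x * b * c * d * e * w1 * w2 * v3 * v4 * u3 * u4 * u5 * s)) := by
  simp only [div_mul_eq_mul_div, mul_div_assoc', div_div, div_div_eq_mul_div]
  rw [div_eq_div_iff (by simp [hx, hq, ha, hb, hc, hd, he, hPB, hPD, hPQ, h1, h2, h3, h4, h5, h6, h7, h8, h9, h10]) (by simp [hx, hq, ha, hb, hc, hd, he, hPB, hPD, hPQ, h1, h2, h3, h4, h5, h6, h7, h8, h9, h10])]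
  ring

lemma cancel8 (Pa PC PE PB PD PQ zk x q a b c d e u1 u2 u3 u4 u5 v1 v2 v3 v4 w1 w2 s g : ℂ)
    (hx : x ≠ 0) (hq : q ≠ 0) (ha : a ≠ 0) (hb : b ≠ 0) (hc : c ≠ 0) (hd : d ≠ 0) (he : e ≠ 0)
    (hPB : PB ≠ 0) (hPD : PD ≠ 0) (hPQ : PQ ≠ 0)
    (h1 : u3 ≠ 0) (h2 : u4 ≠ 0) (h3 : u5 ≠ 0)
    (h4 : v1 ≠ 0) (h5 : v2 ≠ 0) (h6 : v3 ≠ 0) (h7 : v4 ≠ 0)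
    (h8 : w1 ≠ 0) (h9 : w2 ≠ 0) (h10 : s ≠ 0) :
    -(q * q * a * g) / (b * d * (w1 * w2) * (v3 * v4)) *
        (Pa * (1 - a * x) * (PC * (u1 / q)) * (PE * (u2 / q)) /
          (PB * (u3 / q) * (PD * (u4 / q)) * (PQ * u5)) * (u5 * (zk * (b * d / (a * c * e)) / (x * q))))
      = -(q * b * d * s * g * (1 - a * x) * u1 * u2 * u5) * (Pa * PC * PE * zk) / (PB * PD * PQ * (x * b * c * d * e * w1 * w2 * v3 * v4 * u3 * u4 * u5 * s)) := by
  simp only [div_mul_eq_mul_div, mul_div_assoc', div_div, div_div_eq_mul_div]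
  rw [div_eq_div_iff (by simp [hx, hq, ha, hb, hc, hd, he, hPB, hPD, hPQ, h1, h2, h3, h4, h5, h6, h7, h8, h9, h10]) (by simp [hx, hq, ha, hb, hc, hd, he, hPB, hPD, hPQ, h1, h2, h3, h4, h5, h6, h7, h8, h9, h10])]
  ring

lemma qPoch_conv (q y : ℂ) (hq : q ≠ 0) (hy : q - y ≠ 0) (k : ℕ) :
    qPoch q y k = qPoch q (y / q) k * (q - y * q ^ k) / (q - y) := by
  have h := qPoch_shift q y hq k
  rw [eq_div_iff hy]
  have e1 : q * ((1:ℂ) - y / q) = q - y := by field_simp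
  have e2 : q * ((1:ℂ) - y / q * q ^ k) = q - y * q ^ k := by
    rw [mul_sub, mul_one, show y / q * q ^ k = y * q ^ k / q by ring, mul_div_cancel₀ _ hq]
  linear_combination (-q) * h - qPoch q y k * e1 + qPoch q (y / q) k * e2

set_option maxHeartbeats 3200000 in
theorem patternD (q a b c d e : ℂ)
    (hq0 : 0 < ‖q‖) (hq1 : ‖q‖ < 1)
    (ha : a ≠ 0) (hc : c ≠ 0) (he : e ≠ 0)
    (hb0 : b ≠ 0) (hd0 : d ≠ 0)
    (hconv : ‖b * d / (q * a * c * e)‖ < 1)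
    (h1 : 1 - q * a / b ≠ 0) (h2 : 1 - q * a / d ≠ 0)
    (h3 : 1 - c / q ≠ 0) (h4 : 1 - e / q ≠ 0)
    (hp0 : ∀ k, qPoch q (b) k ≠ 0) (hp1 : ∀ k, qPoch q (d) k ≠ 0) (hp2 : ∀ k, qPoch q (b / q) k ≠ 0) (hp3 : ∀ k, qPoch q (d / q) k ≠ 0) :
    (phi32 q (b * d / (a * c * e)) a c e b d =
      (1 - q / b) * (1 - q / d) * a / ((1 - q * a / b) * (1 - q * a / d)) *
        phi32 q (b * d / (a * c * e)) a (c / q) (e / q) (b / q) (d / q) +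
      (1 - a) * (1 - q * a * c * e / (b * d)) * q / ((1 - q * a / b) * (1 - q * a / d) * (c * e)) *
        phi32 q (b * d / (q * a * c * e)) (q * a) c e b d) ∧
    (phi32 q (b * d / (a * c * e)) a c e b d =
      (1 - q / b) * (1 - q / d) * a / ((1 - q * a / b) * (1 - q * a / d)) *
        phi32 q (b * d / (a * c * e)) a (c / q) (e / q) (b / q) (d / q) +
      (1 - q * a * c * e / (b * d)) * (1 - q / b) * (1 - q / d) * a / ((1 - q * a / b) * (1 - q * a / d) * (1 - c / q) * (1 - e / q)) *
        phi32s q (b * d / (q * a * c * e)) a (c / q) (e / q) (b / q) (d / q)) := by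
  have hqne : q ≠ 0 := fun h => by simp [h] at hq0
  have hface : ∀ (y : ℂ) (k : ℕ), (1 : ℂ) - y / q * q ^ k = (q - y * q ^ k) / q := by
    intro y k
    field_simp
  have hvbq : (1 : ℂ) - b / q ≠ 0 := by have h := qPoch_factor_ne hp2 0; simpa using h
  have hvdq : (1 : ℂ) - d / q ≠ 0 := by have h := qPoch_factor_ne hp3 0; simpa using h
  have hv1 : q - b ≠ 0 := fun h => hvbq (by rw [show b = q from by linear_combination -h, div_self hqne, sub_self])
  have hv2 : q - d ≠ 0 := fun h => hvdq (by rw [show d = q from by linear_combination -h, div_self hqne, sub_self])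
  have hv3 : q - c ≠ 0 := fun h => h3 (by rw [show c = q from by linear_combination -h, div_self hqne, sub_self])
  have hv4 : q - e ≠ 0 := fun h => h4 (by rw [show e = q from by linear_combination -h, div_self hqne, sub_self])
  have hw1 : b - q * a ≠ 0 := fun h => h1 (by rw [show q * a = b from by linear_combination -h, div_self hb0, sub_self])
  have hw2 : d - q * a ≠ 0 := fun h => h2 (by rw [show q * a = d from by linear_combination -h, div_self hd0, sub_self])
  have hu3 : ∀ k : ℕ, q - b * q ^ k ≠ 0 := fun k h => qPoch_factor_ne hp2 k (by rw [hface b k, h, zero_div])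
  have hu4 : ∀ k : ℕ, q - d * q ^ k ≠ 0 := fun k h => qPoch_factor_ne hp3 k (by rw [hface d k, h, zero_div])
  have hu5 : ∀ k : ℕ, (1 : ℂ) - q * q ^ k ≠ 0 := fun k => by
    have h := one_sub_pow_ne q hq1 (k + 1) (Nat.succ_ne_zero k)
    rwa [pow_succ'] at h
  have hxne : ∀ k : ℕ, (q : ℂ) ^ k ≠ 0 := fun k => pow_ne_zero k hqne
  have hqace : q * a * c * e ≠ 0 := mul_ne_zero (mul_ne_zero (mul_ne_zero hqne ha) hc) he
  have hs : q * a * c * e - b * d ≠ 0 := by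
    intro h
    rw [show b * d = q * a * c * e from by linear_combination -h, div_self hqace] at hconv
    simp at hconv
  have hZabs : ‖b * d / (a * c * e)‖ < 1 := by
    rw [show b * d / (a * c * e) = b * d / (q * a * c * e) * q from by field_simp, norm_mul]
    nlinarith [norm_nonneg q, norm_nonneg (b * d / (q * a * c * e))]
  have hZpow : ∀ k : ℕ, (b * d / (q * a * c * e)) ^ k = (b * d / (a * c * e)) ^ k / q ^ k := by
    intro k
    rw [show b * d / (q * a * c * e) = b * d / (a * c * e) / q from by field_simp, div_pow]
  have hbd : b * d ≠ 0 := mul_ne_zero hb0 hd0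
  have hce : c * e ≠ 0 := mul_ne_zero hc he
  have br1 : (1 : ℂ) - q / b = (b - q) / b := by rw [eq_div_iff hb0, sub_mul, one_mul, div_mul_cancel₀ _ hb0]
  have br2 : (1 : ℂ) - q / d = (d - q) / d := by rw [eq_div_iff hd0, sub_mul, one_mul, div_mul_cancel₀ _ hd0]
  have br3 : (1 : ℂ) - q * a / b = (b - q * a) / b := by rw [eq_div_iff hb0, sub_mul, one_mul, div_mul_cancel₀ _ hb0]
  have br4 : (1 : ℂ) - q * a / d = (d - q * a) / d := by rw [eq_div_iff hd0, sub_mul, one_mul, div_mul_cancel₀ _ hd0]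
  have br5 : (1 : ℂ) - c / q = (q - c) / q := by rw [eq_div_iff hqne, sub_mul, one_mul, div_mul_cancel₀ _ hqne]
  have br6 : (1 : ℂ) - e / q = (q - e) / q := by rw [eq_div_iff hqne, sub_mul, one_mul, div_mul_cancel₀ _ hqne]
  have br7 : (1 : ℂ) - q * a * c * e / (b * d) = (b * d - q * a * c * e) / (b * d) := by
    rw [eq_div_iff hbd, sub_mul, one_mul, div_mul_cancel₀ _ hbd]
  have hD1 : (1 - q / b) * (1 - q / d) * a / ((1 - q * a / b) * (1 - q * a / d)) = (q - b) * (q - d) * a / ((b - q * a) * (d - q * a)) := by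
    rw [br1, br2, br3, br4]
    simp only [div_mul_eq_mul_div, mul_div_assoc', div_div, div_div_eq_mul_div]
    rw [div_eq_div_iff (by simp [hb0, hd0, hw1, hw2]) (by simp [hw1, hw2])]
    ring
  have hD2 : (1 - a) * (1 - q * a * c * e / (b * d)) * q / ((1 - q * a / b) * (1 - q * a / d) * (c * e)) = (1 - a) * -(q * a * c * e - b * d) * q / ((b - q * a) * (d - q * a) * (c * e)) := by
    rw [br3, br4, br7]
    simp only [div_mul_eq_mul_div, mul_div_assoc', div_div, div_div_eq_mul_div]
    rw [div_eq_div_iff (by simp [hb0, hd0, hw1, hw2, hce]) (by simp [hw1, hw2, hce])]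
    ring
  have hD3 : (1 - q * a * c * e / (b * d)) * (1 - q / b) * (1 - q / d) * a / ((1 - q * a / b) * (1 - q * a / d) * (1 - c / q) * (1 - e / q)) = -(q * a * c * e - b * d) * (q - b) * (q - d) * a * q * q / (b * d * ((b - q * a) * (d - q * a) * (q - c) * (q - e))) := by
    rw [br1, br2, br3, br4, br5, br6, br7]
    simp only [div_mul_eq_mul_div, mul_div_assoc', div_div, div_div_eq_mul_div]
    rw [div_eq_div_iff (by simp [hb0, hd0, hw1, hw2, hv3, hv4, hqne]) (by simp [hb0, hd0, hw1, hw2, hv3, hv4])]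
    ring
  have key : ∀ k : ℕ,
      trm q (b * d / (a * c * e)) a c e b d k = (1 - q / b) * (1 - q / d) * a / ((1 - q * a / b) * (1 - q * a / d)) * trm q (b * d / (a * c * e)) a (c / q) (e / q) (b / q) (d / q) k + ((1 - a) * (1 - q * a * c * e / (b * d)) * q / ((1 - q * a / b) * (1 - q * a / d) * (c * e)) * trm q (b * d / (q * a * c * e)) (q * a) c e b d k + (a * (q - b) * (q - d) / ((b - q * a) * (d - q * a) * (q - c) * (q - e)) * (q * q - c * e * q ^ k) * trms q (b * d / (q * a * c * e)) a (c / q) (e / q) (b / q) (d / q) k - a * (q - b) * (q - d) / ((b - q * a) * (d - q * a) * (q - c) * (q - e)) * (q * q - c * e * q ^ (k + 1)) * trms q (b * d / (q * a * c * e)) a (c / q) (e / q) (b / q) (d / q) (k + 1))) ∧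
      (1 - a) * (1 - q * a * c * e / (b * d)) * q / ((1 - q * a / b) * (1 - q * a / d) * (c * e)) * trm q (b * d / (q * a * c * e)) (q * a) c e b d k = (1 - q * a * c * e / (b * d)) * (1 - q / b) * (1 - q / d) * a / ((1 - q * a / b) * (1 - q * a / d) * (1 - c / q) * (1 - e / q)) * trms q (b * d / (q * a * c * e)) a (c / q) (e / q) (b / q) (d / q) k + ((-(q * q * a * (b * d * (q - b) * (q - d) - q * (b - q) * (d - q) * a * c * e)) / (b * d * ((b - q * a) * (d - q * a)) * ((q - c) * (q - e)))) * trms q (b * d / (q * a * c * e)) a (c / q) (e / q) (b / q) (d / q) k - (-(q * q * a * (b * d * (q - b) * (q - d) - q * (b - q) * (d - q) * a * c * e)) / (b * d * ((b - q * a) * (d - q * a)) * ((q - c) * (q - e)))) * trms q (b * d / (q * a * c * e)) a (c / q) (e / q) (b / q) (d / q) (k + 1)) := by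
    intro k
    have hh1 : trm q (b * d / (a * c * e)) a c e b d k = b * c * d * e * (q - c * q ^ k) * (q - e * q ^ k) * (q - b) * (q - d) * (b - q * a) * (d - q * a) * (1 - q * q ^ k) * (q * a * c * e - b * d) * q ^ k * (qPoch q a k * qPoch q (c / q) k * qPoch q (e / q) k * (b * d / (a * c * e)) ^ k) / (qPoch q (b / q) k * qPoch q (d / q) k * qPoch q q k * (q ^ k * b * c * d * e * (b - q * a) * (d - q * a) * (q - c) * (q - e) * (q - b * q ^ k) * (q - d * q ^ k) * (1 - q * q ^ k) * (q * a * c * e - b * d))) := by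
      simp only [trm]
      rw [qPoch_conv q c hqne hv3 k, qPoch_conv q e hqne hv4 k, qPoch_conv q b hqne hv1 k, qPoch_conv q d hqne hv2 k]
      exact cancel1 (qPoch q a k) (qPoch q (c / q) k) (qPoch q (e / q) k) (qPoch q (b / q) k) (qPoch q (d / q) k) (qPoch q q k) ((b * d / (a * c * e)) ^ k) (q ^ k) q a b c d e (q - c * q ^ k) (q - e * q ^ k) (q - b * q ^ k) (q - d * q ^ k) (1 - q * q ^ k) (q - b) (q - d) (q - c) (q - e) (b - q * a) (d - q * a) (q * a * c * e - b * d) (hxne k) hqne ha hb0 hc hd0 he (hp2 k) (hp3 k) (qPoch_q_ne q hq1 k) (hu3 k) (hu4 k) (hu5 k) hv1 hv2 hv3 hv4 hw1 hw2 hs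
    have hh2 : (1 - q / b) * (1 - q / d) * a / ((1 - q * a / b) * (1 - q * a / d)) * trm q (b * d / (a * c * e)) a (c / q) (e / q) (b / q) (d / q) k = a * b * c * d * e * (q - b) * (q - d) * (q - c) * (q - e) * (q - b * q ^ k) * (q - d * q ^ k) * (1 - q * q ^ k) * (q * a * c * e - b * d) * q ^ k * (qPoch q a k * qPoch q (c / q) k * qPoch q (e / q) k * (b * d / (a * c * e)) ^ k) / (qPoch q (b / q) k * qPoch q (d / q) k * qPoch q q k * (q ^ k * b * c * d * e * (b - q * a) * (d - q * a) * (q - c) * (q - e) * (q - b * q ^ k) * (q - d * q ^ k) * (1 - q * q ^ k) * (q * a * c * e - b * d))) := by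
      rw [hD1]
      simp only [trm]
      exact cancel2 (qPoch q a k) (qPoch q (c / q) k) (qPoch q (e / q) k) (qPoch q (b / q) k) (qPoch q (d / q) k) (qPoch q q k) ((b * d / (a * c * e)) ^ k) (q ^ k) q a b c d e (q - c * q ^ k) (q - e * q ^ k) (q - b * q ^ k) (q - d * q ^ k) (1 - q * q ^ k) (q - b) (q - d) (q - c) (q - e) (b - q * a) (d - q * a) (q * a * c * e - b * d) (hxne k) hqne ha hb0 hc hd0 he (hp2 k) (hp3 k) (qPoch_q_ne q hq1 k) (hu3 k) (hu4 k) (hu5 k) hv1 hv2 hv3 hv4 hw1 hw2 hs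
    have hh3 : (1 - a) * (1 - q * a * c * e / (b * d)) * q / ((1 - q * a / b) * (1 - q * a / d) * (c * e)) * trm q (b * d / (q * a * c * e)) (q * a) c e b d k = -(q * b * d * (1 - a * q ^ k) * (q - c * q ^ k) * (q - e * q ^ k) * (q - b) * (q - d) * (1 - q * q ^ k) * (q * a * c * e - b * d) * (q * a * c * e - b * d)) * (qPoch q a k * qPoch q (c / q) k * qPoch q (e / q) k * (b * d / (a * c * e)) ^ k) / (qPoch q (b / q) k * qPoch q (d / q) k * qPoch q q k * (q ^ k * b * c * d * e * (b - q * a) * (d - q * a) * (q - c) * (q - e) * (q - b * q ^ k) * (q - d * q ^ k) * (1 - q * q ^ k) * (q * a * c * e - b * d))) := by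
      rw [hD2]
      simp only [trm]
      rw [qPoch_conv q c hqne hv3 k, qPoch_conv q e hqne hv4 k, qPoch_conv q b hqne hv1 k, qPoch_conv q d hqne hv2 k]
      rw [hZpow k]
      exact cancel3 (qPoch q a k) (qPoch q (c / q) k) (qPoch q (e / q) k) (qPoch q (b / q) k) (qPoch q (d / q) k) (qPoch q q k) ((b * d / (a * c * e)) ^ k) (q ^ k) q a b c d e (q - c * q ^ k) (q - e * q ^ k) (q - b * q ^ k) (q - d * q ^ k) (1 - q * q ^ k) (q - b) (q - d) (q - c) (q - e) (b - q * a) (d - q * a) (q * a * c * e - b * d) (1 - a) (qPoch q (q * a) k) (hxne k) hqne ha hb0 hc hd0 he (hp2 k) (hp3 k) (qPoch_q_ne q hq1 k) (hu3 k) (hu4 k) (hu5 k) hv1 hv2 hv3 hv4 hw1 hw2 hs (qPoch_rel_a q a k)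
    have hh4 : a * (q - b) * (q - d) / ((b - q * a) * (d - q * a) * (q - c) * (q - e)) * (q * q - c * e * q ^ k) * trms q (b * d / (q * a * c * e)) a (c / q) (e / q) (b / q) (d / q) k = a * b * c * d * e * (q - b) * (q - d) * (q * q - c * e * q ^ k) * (1 - q ^ k) * (q - b * q ^ k) * (q - d * q ^ k) * (1 - q * q ^ k) * (q * a * c * e - b * d) * (qPoch q a k * qPoch q (c / q) k * qPoch q (e / q) k * (b * d / (a * c * e)) ^ k) / (qPoch q (b / q) k * qPoch q (d / q) k * qPoch q q k * (q ^ k * b * c * d * e * (b - q * a) * (d - q * a) * (q - c) * (q - e) * (q - b * q ^ k) * (q - d * q ^ k) * (1 - q * q ^ k) * (q * a * c * e - b * d))) := by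
      simp only [trms]
      rw [hZpow k]
      exact cancel4 (qPoch q a k) (qPoch q (c / q) k) (qPoch q (e / q) k) (qPoch q (b / q) k) (qPoch q (d / q) k) (qPoch q q k) ((b * d / (a * c * e)) ^ k) (q ^ k) q a b c d e (q - c * q ^ k) (q - e * q ^ k) (q - b * q ^ k) (q - d * q ^ k) (1 - q * q ^ k) (q - b) (q - d) (q - c) (q - e) (b - q * a) (d - q * a) (q * a * c * e - b * d) (hxne k) hqne ha hb0 hc hd0 he (hp2 k) (hp3 k) (qPoch_q_ne q hq1 k) (hu3 k) (hu4 k) (hu5 k) hv1 hv2 hv3 hv4 hw1 hw2 hs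
    have hh5 : a * (q - b) * (q - d) / ((b - q * a) * (d - q * a) * (q - c) * (q - e)) * (q * q - c * e * q ^ (k + 1)) * trms q (b * d / (q * a * c * e)) a (c / q) (e / q) (b / q) (d / q) (k + 1) = b * b * d * d * (q - b) * (q - d) * (q - c * e * q ^ k) * (1 - a * q ^ k) * (q - c * q ^ k) * (q - e * q ^ k) * (1 - q * q ^ k) * (q * a * c * e - b * d) * (qPoch q a k * qPoch q (c / q) k * qPoch q (e / q) k * (b * d / (a * c * e)) ^ k) / (qPoch q (b / q) k * qPoch q (d / q) k * qPoch q q k * (q ^ k * b * c * d * e * (b - q * a) * (d - q * a) * (q - c) * (q - e) * (q - b * q ^ k) * (q - d * q ^ k) * (1 - q * q ^ k) * (q * a * c * e - b * d))) := by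
      simp only [trms]
      rw [qPoch_succ q a k, qPoch_succ q (c / q) k, qPoch_succ q (e / q) k, qPoch_succ q (b / q) k, qPoch_succ q (d / q) k, qPoch_succ q q k, hface c k, hface e k, hface b k, hface d k]
      rw [hZpow (k + 1)]
      simp only [pow_succ]
      rw [show (1 : ℂ) - q ^ k * q = 1 - q * q ^ k from by ring]
      exact cancel5 (qPoch q a k) (qPoch q (c / q) k) (qPoch q (e / q) k) (qPoch q (b / q) k) (qPoch q (d / q) k) (qPoch q q k) ((b * d / (a * c * e)) ^ k) (q ^ k) q a b c d e (q - c * q ^ k) (q - e * q ^ k) (q - b * q ^ k) (q - d * q ^ k) (1 - q * q ^ k) (q - b) (q - d) (q - c) (q - e) (b - q * a) (d - q * a) (q * a * c * e - b * d) (hxne k) hqne ha hb0 hc hd0 he (hp2 k) (hp3 k) (qPoch_q_ne q hq1 k) (hu3 k) (hu4 k) (hu5 k) hv1 hv2 hv3 hv4 hw1 hw2 hs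
    have hh6 : (1 - q * a * c * e / (b * d)) * (1 - q / b) * (1 - q / d) * a / ((1 - q * a / b) * (1 - q * a / d) * (1 - c / q) * (1 - e / q)) * trms q (b * d / (q * a * c * e)) a (c / q) (e / q) (b / q) (d / q) k = -(q * q * a * c * e * (q * a * c * e - b * d) * (q * a * c * e - b * d) * (q - b) * (q - d) * (1 - q ^ k) * (q - b * q ^ k) * (q - d * q ^ k) * (1 - q * q ^ k)) * (qPoch q a k * qPoch q (c / q) k * qPoch q (e / q) k * (b * d / (a * c * e)) ^ k) / (qPoch q (b / q) k * qPoch q (d / q) k * qPoch q q k * (q ^ k * b * c * d * e * (b - q * a) * (d - q * a) * (q - c) * (q - e) * (q - b * q ^ k) * (q - d * q ^ k) * (1 - q * q ^ k) * (q * a * c * e - b * d))) := by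
      rw [hD3]
      simp only [trms]
      rw [hZpow k]
      exact cancel6 (qPoch q a k) (qPoch q (c / q) k) (qPoch q (e / q) k) (qPoch q (b / q) k) (qPoch q (d / q) k) (qPoch q q k) ((b * d / (a * c * e)) ^ k) (q ^ k) q a b c d e (q - c * q ^ k) (q - e * q ^ k) (q - b * q ^ k) (q - d * q ^ k) (1 - q * q ^ k) (q - b) (q - d) (q - c) (q - e) (b - q * a) (d - q * a) (q * a * c * e - b * d) (hxne k) hqne ha hb0 hc hd0 he (hp2 k) (hp3 k) (qPoch_q_ne q hq1 k) (hu3 k) (hu4 k) (hu5 k) hv1 hv2 hv3 hv4 hw1 hw2 hs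
    have hh7 : (-(q * q * a * (b * d * (q - b) * (q - d) - q * (b - q) * (d - q) * a * c * e)) / (b * d * ((b - q * a) * (d - q * a)) * ((q - c) * (q - e)))) * trms q (b * d / (q * a * c * e)) a (c / q) (e / q) (b / q) (d / q) k = -(q * q * a * c * e * (q * a * c * e - b * d) * (b * d * (q - b) * (q - d) - q * (b - q) * (d - q) * a * c * e) * (1 - q ^ k) * (q - b * q ^ k) * (q - d * q ^ k) * (1 - q * q ^ k)) * (qPoch q a k * qPoch q (c / q) k * qPoch q (e / q) k * (b * d / (a * c * e)) ^ k) / (qPoch q (b / q) k * qPoch q (d / q) k * qPoch q q k * (q ^ k * b * c * d * e * (b - q * a) * (d - q * a) * (q - c) * (q - e) * (q - b * q ^ k) * (q - d * q ^ k) * (1 - q * q ^ k) * (q * a * c * e - b * d))) := by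
      simp only [trms]
      rw [hZpow k]
      exact cancel7 (qPoch q a k) (qPoch q (c / q) k) (qPoch q (e / q) k) (qPoch q (b / q) k) (qPoch q (d / q) k) (qPoch q q k) ((b * d / (a * c * e)) ^ k) (q ^ k) q a b c d e (q - c * q ^ k) (q - e * q ^ k) (q - b * q ^ k) (q - d * q ^ k) (1 - q * q ^ k) (q - b) (q - d) (q - c) (q - e) (b - q * a) (d - q * a) (q * a * c * e - b * d) (b * d * (q - b) * (q - d) - q * (b - q) * (d - q) * a * c * e) (hxne k) hqne ha hb0 hc hd0 he (hp2 k) (hp3 k) (qPoch_q_ne q hq1 k) (hu3 k) (hu4 k) (hu5 k) hv1 hv2 hv3 hv4 hw1 hw2 hs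
    have hh8 : (-(q * q * a * (b * d * (q - b) * (q - d) - q * (b - q) * (d - q) * a * c * e)) / (b * d * ((b - q * a) * (d - q * a)) * ((q - c) * (q - e)))) * trms q (b * d / (q * a * c * e)) a (c / q) (e / q) (b / q) (d / q) (k + 1) = -(q * b * d * (q * a * c * e - b * d) * (b * d * (q - b) * (q - d) - q * (b - q) * (d - q) * a * c * e) * (1 - a * q ^ k) * (q - c * q ^ k) * (q - e * q ^ k) * (1 - q * q ^ k)) * (qPoch q a k * qPoch q (c / q) k * qPoch q (e / q) k * (b * d / (a * c * e)) ^ k) / (qPoch q (b / q) k * qPoch q (d / q) k * qPoch q q k * (q ^ k * b * c * d * e * (b - q * a) * (d - q * a) * (q - c) * (q - e) * (q - b * q ^ k) * (q - d * q ^ k) * (1 - q * q ^ k) * (q * a * c * e - b * d))) := by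
      simp only [trms]
      rw [qPoch_succ q a k, qPoch_succ q (c / q) k, qPoch_succ q (e / q) k, qPoch_succ q (b / q) k, qPoch_succ q (d / q) k, qPoch_succ q q k, hface c k, hface e k, hface b k, hface d k]
      rw [hZpow (k + 1)]
      simp only [pow_succ]
      rw [show (1 : ℂ) - q ^ k * q = 1 - q * q ^ k from by ring]
      exact cancel8 (qPoch q a k) (qPoch q (c / q) k) (qPoch q (e / q) k) (qPoch q (b / q) k) (qPoch q (d / q) k) (qPoch q q k) ((b * d / (a * c * e)) ^ k) (q ^ k) q a b c d e (q - c * q ^ k) (q - e * q ^ k) (q - b * q ^ k) (q - d * q ^ k) (1 - q * q ^ k) (q - b) (q - d) (q - c) (q - e) (b - q * a) (d - q * a) (q * a * c * e - b * d) (b * d * (q - b) * (q - d) - q * (b - q) * (d - q) * a * c * e) (hxne k) hqne ha hb0 hc hd0 he (hp2 k) (hp3 k) (qPoch_q_ne q hq1 k) (hu3 k) (hu4 k) (hu5 k) hv1 hv2 hv3 hv4 hw1 hw2 hs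
    constructor
    · linear_combination hh1 - hh2 - hh3 - hh4 + hh5
    · linear_combination hh3 - hh6 - hh7 + hh8
  have hnq : ‖q‖ < 1 := by exact hq1
  have SA : Summable (fun k => trm q (b * d / (a * c * e)) a c e b d k) :=
    trm_summable q (b * d / (a * c * e)) a c e b d hq1 (by exact hZabs) hp0 hp1
  have SB : Summable (fun k => trm q (b * d / (a * c * e)) a (c / q) (e / q) (b / q) (d / q) k) :=
    trm_summable q (b * d / (a * c * e)) a (c / q) (e / q) (b / q) (d / q) hq1 (by exact hZabs) hp2 hp3
  have SC : Summable (fun k => trm q (b * d / (q * a * c * e)) (q * a) c e b d k) :=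
    trm_summable q (b * d / (q * a * c * e)) (q * a) c e b d hq1 (by exact hconv) hp0 hp1
  have SBq : Summable (fun k => trm q (b * d / (q * a * c * e)) a (c / q) (e / q) (b / q) (d / q) k) :=
    trm_summable q (b * d / (q * a * c * e)) a (c / q) (e / q) (b / q) (d / q) hq1 (by exact hconv) hp2 hp3
  have SS : Summable (fun k => trms q (b * d / (q * a * c * e)) a (c / q) (e / q) (b / q) (d / q) k) := by
    apply Summable.of_norm_bounded (g := fun k => 2 * ‖trm q (b * d / (q * a * c * e)) a (c / q) (e / q) (b / q) (d / q) k‖)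
      ((summable_norm_iff.mpr SBq).mul_left 2)
    intro k
    have he1 : trms q (b * d / (q * a * c * e)) a (c / q) (e / q) (b / q) (d / q) k = (1 - q ^ k) * trm q (b * d / (q * a * c * e)) a (c / q) (e / q) (b / q) (d / q) k := by
      simp only [trm, trms]
      ring
    rw [he1, norm_mul]
    have hb2 : ‖(1 : ℂ) - q ^ k‖ ≤ 2 := by
      calc ‖(1 : ℂ) - q ^ k‖ ≤ ‖(1 : ℂ)‖ + ‖q ^ k‖ := norm_sub_le _ _
        _ ≤ 1 + 1 := by
            rw [norm_one, norm_pow]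
            have := pow_le_one₀ (norm_nonneg q) hnq.le (n := k)
            linarith
        _ = 2 := by norm_num
    exact mul_le_mul_of_nonneg_right hb2 (norm_nonneg _)
  have SS1 : Summable (fun k => trms q (b * d / (q * a * c * e)) a (c / q) (e / q) (b / q) (d / q) (k + 1)) := (summable_nat_add_iff 1).mpr SS
  have St : Summable (fun k => a * (q - b) * (q - d) / ((b - q * a) * (d - q * a) * (q - c) * (q - e)) * (q * q - c * e * q ^ k) * trms q (b * d / (q * a * c * e)) a (c / q) (e / q) (b / q) (d / q) k) := by
    apply Summable.of_norm_bounded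
      (g := fun k => ‖a * (q - b) * (q - d) / ((b - q * a) * (d - q * a) * (q - c) * (q - e))‖ * (‖q * q‖ + ‖c * e‖) * ‖trms q (b * d / (q * a * c * e)) a (c / q) (e / q) (b / q) (d / q) k‖)
      ((summable_norm_iff.mpr SS).mul_left _)
    intro k
    rw [norm_mul, norm_mul]
    apply mul_le_mul_of_nonneg_right _ (norm_nonneg _)
    apply mul_le_mul_of_nonneg_left _ (norm_nonneg _)
    calc ‖q * q - c * e * q ^ k‖ ≤ ‖q * q‖ + ‖c * e * q ^ k‖ := norm_sub_le _ _
      _ ≤ ‖q * q‖ + ‖c * e‖ := by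
          have h2 : ‖c * e * q ^ k‖ ≤ ‖c * e‖ := by
            rw [norm_mul, norm_pow]
            have h1 : ‖q‖ ^ k ≤ 1 := pow_le_one₀ (norm_nonneg q) hnq.le
            nlinarith [norm_nonneg (c * e)]
          linarith
  have St1 : Summable (fun k => a * (q - b) * (q - d) / ((b - q * a) * (d - q * a) * (q - c) * (q - e)) * (q * q - c * e * q ^ (k + 1)) * trms q (b * d / (q * a * c * e)) a (c / q) (e / q) (b / q) (d / q) (k + 1)) := (summable_nat_add_iff 1).mpr St
  have ht0 : a * (q - b) * (q - d) / ((b - q * a) * (d - q * a) * (q - c) * (q - e)) * (q * q - c * e * q ^ 0) * trms q (b * d / (q * a * c * e)) a (c / q) (e / q) (b / q) (d / q) 0 = 0 := by simp [trms]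
  have hs0 : trms q (b * d / (q * a * c * e)) a (c / q) (e / q) (b / q) (d / q) 0 = 0 := by simp [trms]
  have hTel : ∑' k : ℕ, (a * (q - b) * (q - d) / ((b - q * a) * (d - q * a) * (q - c) * (q - e)) * (q * q - c * e * q ^ k) * trms q (b * d / (q * a * c * e)) a (c / q) (e / q) (b / q) (d / q) k - a * (q - b) * (q - d) / ((b - q * a) * (d - q * a) * (q - c) * (q - e)) * (q * q - c * e * q ^ (k + 1)) * trms q (b * d / (q * a * c * e)) a (c / q) (e / q) (b / q) (d / q) (k + 1)) = 0 := by
    rw [Summable.tsum_sub St St1, Summable.tsum_eq_zero_add St, ht0, zero_add, sub_self]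
  have hTel2 : ∑' k : ℕ, ((-(q * q * a * (b * d * (q - b) * (q - d) - q * (b - q) * (d - q) * a * c * e)) / (b * d * ((b - q * a) * (d - q * a)) * ((q - c) * (q - e)))) * trms q (b * d / (q * a * c * e)) a (c / q) (e / q) (b / q) (d / q) k - (-(q * q * a * (b * d * (q - b) * (q - d) - q * (b - q) * (d - q) * a * c * e)) / (b * d * ((b - q * a) * (d - q * a)) * ((q - c) * (q - e)))) * trms q (b * d / (q * a * c * e)) a (c / q) (e / q) (b / q) (d / q) (k + 1)) = 0 := by
    rw [Summable.tsum_sub (SS.mul_left _) (SS1.mul_left _), Summable.tsum_eq_zero_add (SS.mul_left (-(q * q * a * (b * d * (q - b) * (q - d) - q * (b - q) * (d - q) * a * c * e)) / (b * d * ((b - q * a) * (d - q * a)) * ((q - c) * (q - e))))), hs0, mul_zero, zero_add, sub_self]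
  have conj1 : phi32 q (b * d / (a * c * e)) a c e b d =
      (1 - q / b) * (1 - q / d) * a / ((1 - q * a / b) * (1 - q * a / d)) * phi32 q (b * d / (a * c * e)) a (c / q) (e / q) (b / q) (d / q) + (1 - a) * (1 - q * a * c * e / (b * d)) * q / ((1 - q * a / b) * (1 - q * a / d) * (c * e)) * phi32 q (b * d / (q * a * c * e)) (q * a) c e b d := by
    calc phi32 q (b * d / (a * c * e)) a c e b d = ∑' k : ℕ, trm q (b * d / (a * c * e)) a c e b d k := rfl
      _ = ∑' k : ℕ, ((1 - q / b) * (1 - q / d) * a / ((1 - q * a / b) * (1 - q * a / d)) * trm q (b * d / (a * c * e)) a (c / q) (e / q) (b / q) (d / q) k + ((1 - a) * (1 - q * a * c * e / (b * d)) * q / ((1 - q * a / b) * (1 - q * a / d) * (c * e)) * trm q (b * d / (q * a * c * e)) (q * a) c e b d k + (a * (q - b) * (q - d) / ((b - q * a) * (d - q * a) * (q - c) * (q - e)) * (q * q - c * e * q ^ k) * trms q (b * d / (q * a * c * e)) a (c / q) (e / q) (b / q) (d / q) k - a * (q - b) * (q - d) / ((b - q * a) * (d - q * a) * (q - c) * (q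 - e)) * (q * q - c * e * q ^ (k + 1)) * trms q (b * d / (q * a * c * e)) a (c / q) (e / q) (b / q) (d / q) (k + 1)))) :=
          tsum_congr fun k => (key k).1
      _ = (∑' k : ℕ, (1 - q / b) * (1 - q / d) * a / ((1 - q * a / b) * (1 - q * a / d)) * trm q (b * d / (a * c * e)) a (c / q) (e / q) (b / q) (d / q) k) + ∑' k : ℕ, ((1 - a) * (1 - q * a * c * e / (b * d)) * q / ((1 - q * a / b) * (1 - q * a / d) * (c * e)) * trm q (b * d / (q * a * c * e)) (q * a) c e b d k + (a * (q - b) * (q - d) / ((b - q * a) * (d - q * a) * (q - c) * (q - e)) * (q * q - c * e * q ^ k) * trms q (b * d / (q * a * c * e)) a (c / q) (e / q) (b / q) (d / q) k - a * (q - b) * (q - d) / ((b - q * a) * (d - q * a) * (q - c) * (q - e)) * (q * q - c * e * q ^ (k + 1)) * trms q (b * d / (q * a * c * e)) a (c / q) (e / q) (b / q) (d / q) (k + 1))) :=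
          Summable.tsum_add (SB.mul_left _) ((SC.mul_left _).add (St.sub St1))
      _ = (∑' k : ℕ, (1 - q / b) * (1 - q / d) * a / ((1 - q * a / b) * (1 - q * a / d)) * trm q (b * d / (a * c * e)) a (c / q) (e / q) (b / q) (d / q) k) + ((∑' k : ℕ, (1 - a) * (1 - q * a * c * e / (b * d)) * q / ((1 - q * a / b) * (1 - q * a / d) * (c * e)) * trm q (b * d / (q * a * c * e)) (q * a) c e b d k) + ∑' k : ℕ, (a * (q - b) * (q - d) / ((b - q * a) * (d - q * a) * (q - c) * (q - e)) * (q * q - c * e * q ^ k) * trms q (b * d / (q * a * c * e)) a (c / q) (e / q) (b / q) (d / q) k - a * (q - b) * (q - d) / ((b - q * a) * (d - q * a) * (q - c) * (q - e)) * (q * q - c * e * q ^ (k + 1)) * trms q (b * d / (q * a * c * e)) a (c / q) (e / q) (b / q) (d / q) (k + 1))) := by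
          rw [Summable.tsum_add (SC.mul_left _) (St.sub St1)]
      _ = (1 - q / b) * (1 - q / d) * a / ((1 - q * a / b) * (1 - q * a / d)) * phi32 q (b * d / (a * c * e)) a (c / q) (e / q) (b / q) (d / q) + (1 - a) * (1 - q * a * c * e / (b * d)) * q / ((1 - q * a / b) * (1 - q * a / d) * (c * e)) * phi32 q (b * d / (q * a * c * e)) (q * a) c e b d := by
          rw [hTel, tsum_mul_left, tsum_mul_left, add_zero]
          rfl
  have conj2 : (1 - a) * (1 - q * a * c * e / (b * d)) * q / ((1 - q * a / b) * (1 - q * a / d) * (c * e)) * phi32 q (b * d / (q * a * c * e)) (q * a) c e b d =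
      (1 - q * a * c * e / (b * d)) * (1 - q / b) * (1 - q / d) * a / ((1 - q * a / b) * (1 - q * a / d) * (1 - c / q) * (1 - e / q)) * phi32s q (b * d / (q * a * c * e)) a (c / q) (e / q) (b / q) (d / q) := by
    calc (1 - a) * (1 - q * a * c * e / (b * d)) * q / ((1 - q * a / b) * (1 - q * a / d) * (c * e)) * phi32 q (b * d / (q * a * c * e)) (q * a) c e b d = ∑' k : ℕ, (1 - a) * (1 - q * a * c * e / (b * d)) * q / ((1 - q * a / b) * (1 - q * a / d) * (c * e)) * trm q (b * d / (q * a * c * e)) (q * a) c e b d k := by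
          rw [show phi32 q (b * d / (q * a * c * e)) (q * a) c e b d = ∑' k : ℕ, trm q (b * d / (q * a * c * e)) (q * a) c e b d k from rfl, ← tsum_mul_left]
      _ = ∑' k : ℕ, ((1 - q * a * c * e / (b * d)) * (1 - q / b) * (1 - q / d) * a / ((1 - q * a / b) * (1 - q * a / d) * (1 - c / q) * (1 - e / q)) * trms q (b * d / (q * a * c * e)) a (c / q) (e / q) (b / q) (d / q) k + ((-(q * q * a * (b * d * (q - b) * (q - d) - q * (b - q) * (d - q) * a * c * e)) / (b * d * ((b - q * a) * (d - q * a)) * ((q - c) * (q - e)))) * trms q (b * d / (q * a * c * e)) a (c / q) (e / q) (b / q) (d / q) k - (-(q * q * a * (b * d * (q - b) * (q - d) - q * (b - q) * (d - q) * a * c * e)) / (b * d * ((b - q * a) * (d - q * a)) * ((q - c) * (q - e)))) * trms q (b * d / (q * a * c * e)) a (c / q) (e / q) (b / q) (d / q) (k + 1))) :=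
          tsum_congr fun k => (key k).2
      _ = (∑' k : ℕ, (1 - q * a * c * e / (b * d)) * (1 - q / b) * (1 - q / d) * a / ((1 - q * a / b) * (1 - q * a / d) * (1 - c / q) * (1 - e / q)) * trms q (b * d / (q * a * c * e)) a (c / q) (e / q) (b / q) (d / q) k) + ∑' k : ℕ, ((-(q * q * a * (b * d * (q - b) * (q - d) - q * (b - q) * (d - q) * a * c * e)) / (b * d * ((b - q * a) * (d - q * a)) * ((q - c) * (q - e)))) * trms q (b * d / (q * a * c * e)) a (c / q) (e / q) (b / q) (d / q) k - (-(q * q * a * (b * d * (q - b) * (q - d) - q * (b - q) * (d - q) * a * c * e)) / (b * d * ((b - q * a) * (d - q * a)) * ((q - c) * (q - e)))) * trms q (b * d / (q * a * c * e)) a (c / q) (e / q) (b / q) (d / q) (k + 1)) :=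
          Summable.tsum_add (SS.mul_left _) ((SS.mul_left _).sub (SS1.mul_left _))
      _ = (1 - q * a * c * e / (b * d)) * (1 - q / b) * (1 - q / d) * a / ((1 - q * a / b) * (1 - q * a / d) * (1 - c / q) * (1 - e / q)) * phi32s q (b * d / (q * a * c * e)) a (c / q) (e / q) (b / q) (d / q) := by
          rw [hTel2, tsum_mul_left, add_zero]
          rfl
  refine ⟨conj1, ?_⟩
  rw [conj1, conj2]
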